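/- Let σ be a trace and e1, e2, e2' events with e1 <_σ e2, e2 ≤_TO e2', e1 conflicting with e2 and with e2'. If (e1, e2) is not a sync-preserving race of σ, then (e1, e2') is also not a sync-preserving race of σ. -/

import Mathlib

/- A model of concurrent program traces: events are read/write/acquire/release
operations performed by threads; a trace is a finite sequence of events,
identified by their indices. -/

inductive Op where
  | read  (x : ℕ)
  | write (x : ℕ)
  | acq (l : ℕ)
  | rel (l : ℕ)
deriving DecidableEq

structure Event where
  thread : ℕ
  op : Op
deriving DecidableEq

def evAt (σ : List Event) (i : ℕ) : Event := σ.getD i ⟨0, Op.read 0⟩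

def threadOf (σ : List Event) (i : ℕ) : ℕ := (evAt σ i).thread

def isAcq (σ : List Event) (l i : ℕ) : Prop := i < σ.length ∧ (evAt σ i).op = Op.acq l
def isRel (σ : List Event) (l i : ℕ) : Prop := i < σ.length ∧ (evAt σ i).op = Op.rel l
def isRead (σ : List Event) (x i : ℕ) : Prop := i < σ.length ∧ (evAt σ i).op = Op.read x
def isWrite (σ : List Event) (x i : ℕ) : Prop := i < σ.length ∧ (evAt σ i).op = Op.write x

/-- `e` is an event on lock `l` (an acquire or release of `l`). -/
def onLock (l : ℕ) (e : Event) : Bool := decide (e.op = Op.acq l ∨ e.op = Op.rel l)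

/-- Thread order: `i` and `j` are events of the same thread with `i` not after `j`. -/
def TO (σ : List Event) (i j : ℕ) : Prop :=
  i ≤ j ∧ j < σ.length ∧ threadOf σ i = threadOf σ j

/-- Alternating sequence of matched acquire/release pairs on lock `l`, each pair
performed by a single thread, with at most one unmatched acquire at the end. -/
inductive LockAlt (l : ℕ) : List Event → Prop
  | nil : LockAlt l []
  | pending (t : ℕ) : LockAlt l [⟨t, Op.acq l⟩]
  | pair (t : ℕ) {rest : List Event} : LockAlt l rest →
      LockAlt l (⟨t, Op.acq l⟩ :: ⟨t, Op.rel l⟩ :: rest)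

/-- Well-formedness of an event sequence: for each lock, the projection alternates
matched acquire/release pairs, with at most one pending acquire. -/
def WellFormedEvents (es : List Event) : Prop := ∀ l, LockAlt l (es.filter (onLock l))

/-- Words of the language `(Σ_t ⟨t, acq(l)⟩ · ⟨t, rel(l)⟩)*`. -/
inductive PairsLang (l : ℕ) : List Event → Prop
  | nil : PairsLang l []
  | pair (t : ℕ) {rest : List Event} : PairsLang l rest →
      PairsLang l (⟨t, Op.acq l⟩ :: ⟨t, Op.rel l⟩ :: rest)

/-- Lock semantics: for every lock `l`, the projection of the trace onto events on `l`
is a prefix of a word in the language `(Σ_t ⟨t, acq(l)⟩ · ⟨t, rel(l)⟩)*`. -/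
def LockSem (σ : List Event) : Prop :=
  ∀ l, ∃ w, PairsLang l w ∧ (σ.filter (onLock l)) <+: w

/-- Thread `t` holds lock `l` after the prefix of length `n`: the last event of the
prefix on lock `l` is an acquire of `l` by `t`. -/
def Holds (σ : List Event) (n t l : ℕ) : Prop :=
  ∃ i, i < n ∧ isAcq σ l i ∧ threadOf σ i = t ∧
    ∀ j, i < j → j < n → j < σ.length → onLock l (evAt σ j) = false

/-- `r` is the matching release of the acquire `a`: same thread, same lock, with no
intervening event on that lock in between. -/
def MatchRel (σ : List Event) (a r : ℕ) : Prop :=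
  ∃ l, isAcq σ l a ∧ isRel σ l r ∧ a < r ∧ threadOf σ a = threadOf σ r ∧
    ∀ k, a < k → k < r → ¬ (isAcq σ l k ∨ isRel σ l k)

/-- `i` is the last write (on the common variable) before the read `j` in `σ`. -/
def LastWrite (σ : List Event) (i j : ℕ) : Prop :=
  ∃ x, isWrite σ x i ∧ isRead σ x j ∧ i < j ∧ ∀ k, i < k → k < j → ¬ isWrite σ x k

/-- `i` is the immediate thread-order predecessor of `j` in `σ`. -/
def Prev (σ : List Event) (j i : ℕ) : Prop :=
  i < j ∧ j < σ.length ∧ threadOf σ i = threadOf σ j ∧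
    ∀ k, i < k → k < j → threadOf σ k ≠ threadOf σ j

/-- `S` is downward-closed with respect to thread order. -/
def TODownClosed (σ : List Event) (S : Set ℕ) : Prop :=
  ∀ i j, TO σ i j → j ∈ S → i ∈ S

/-- `S` is `(TO, lw)`-closed. -/
def TOLWClosed (σ : List Event) (S : Set ℕ) : Prop :=
  TODownClosed σ S ∧ ∀ i j, LastWrite σ i j → j ∈ S → i ∈ S

/-- `S` is sync-preserving closed. -/
def SPClosed (σ : List Event) (S : Set ℕ) : Prop :=
  TOLWClosed σ S ∧
    ∀ l a1 a2 r1, isAcq σ l a1 → isAcq σ l a2 → a1 < a2 →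
      a1 ∈ S → a2 ∈ S → MatchRel σ a1 r1 → r1 ∈ S

/-- The sync-preserving closure of `S`. -/
def SPClosure (σ : List Event) (S : Set ℕ) : Set ℕ :=
  ⋂₀ {S' : Set ℕ | S ⊆ S' ∧ SPClosed σ S'}

def PrevSet (σ : List Event) (j : ℕ) : Set ℕ := {i | Prev σ j i}

def SPIdeal (σ : List Event) (e1 e2 : ℕ) : Set ℕ :=
  SPClosure σ (PrevSet σ e1 ∪ PrevSet σ e2)

/-- `i` occurs before `j` in the reordering `ρ` (a list of σ-indices). -/
def RBefore (ρ : List ℕ) (i j : ℕ) : Prop :=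
  i ∈ ρ ∧ j ∈ ρ ∧ ρ.idxOf i < ρ.idxOf j

/-- `i` is the last write before the read `j` in the reordering `ρ`. -/
def LastWriteIn (σ : List Event) (ρ : List ℕ) (i j : ℕ) : Prop :=
  ∃ x, isWrite σ x i ∧ isRead σ x j ∧ RBefore ρ i j ∧
    ∀ k, isWrite σ x k → ¬ (RBefore ρ i k ∧ RBefore ρ k j)

/-- `ρ` (a duplicate-free list of σ-indices, read as a trace) is a correct reordering
of `σ`: a well-formed trace over a subset of events of `σ` that is downward-closed
under thread order, respects thread order, and in which every read observes the
same last write as in `σ`. -/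
def CorrectReordering (σ : List Event) (ρ : List ℕ) : Prop :=
  ρ.Nodup ∧ (∀ i ∈ ρ, i < σ.length) ∧
  WellFormedEvents (ρ.map (evAt σ)) ∧
  (∀ i j, TO σ i j → j ∈ ρ → i ∈ ρ) ∧
  (∀ i j, i ∈ ρ → j ∈ ρ → i ≠ j → TO σ i j → RBefore ρ i j) ∧
  (∀ j x, isRead σ x j → j ∈ ρ → ∀ i, LastWriteIn σ ρ i j ↔ LastWrite σ i j)

/-- Event `e` of `σ` is σ-enabled in the reordering `ρ`. -/
def EnabledIn (σ : List Event) (ρ : List ℕ) (e : ℕ) : Prop :=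
  e < σ.length ∧ e ∉ ρ ∧ ∀ i, i ≠ e → TO σ i e → i ∈ ρ

/-- `ρ` is sync-preserving w.r.t. `σ`: any two same-lock acquires occurring in `ρ`
appear in the same relative order as in `σ`. -/
def SyncPreserving (σ : List Event) (ρ : List ℕ) : Prop :=
  ∀ l a1 a2, isAcq σ l a1 → isAcq σ l a2 → a1 ∈ ρ → a2 ∈ ρ →
    (RBefore ρ a1 a2 ↔ a1 < a2)

/-- Conflicting events: different threads, common variable, at least one write. -/
def Conflict (σ : List Event) (i j : ℕ) : Prop :=
  i < σ.length ∧ j < σ.length ∧ threadOf σ i ≠ threadOf σ j ∧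
    ∃ x, (isWrite σ x i ∧ (isWrite σ x j ∨ isRead σ x j)) ∨
         (isRead σ x i ∧ isWrite σ x j)

/-- `(e1, e2)` is a sync-preserving race of `σ`. -/
def SPRace (σ : List Event) (e1 e2 : ℕ) : Prop :=
  Conflict σ e1 e2 ∧ ∃ ρ : List ℕ, CorrectReordering σ ρ ∧ SyncPreserving σ ρ ∧
    EnabledIn σ ρ e1 ∧ EnabledIn σ ρ e2

/-- Happens-before: smallest transitive relation containing thread order and
ordering each release of a lock before every later acquire of that lock. -/
inductive HB (σ : List Event) : ℕ → ℕ → Prop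
  | to {i j : ℕ} : TO σ i j → HB σ i j
  | relacq {l i j : ℕ} : isRel σ l i → isAcq σ l j → i < j → HB σ i j
  | trans {i j k : ℕ} : HB σ i j → HB σ j k → HB σ i k

/-- Schedulable-happens-before: smallest transitive relation containing HB and
ordering each write of a variable before every later read of that variable. -/
inductive SHB (σ : List Event) : ℕ → ℕ → Prop
  | hb {i j : ℕ} : HB σ i j → SHB σ i j
  | wr {x i j : ℕ} : isWrite σ x i → isRead σ x j → i < j → SHB σ i j
  | trans {i j k : ℕ} : SHB σ i j → SHB σ j k → SHB σ i k

open List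

lemma RB.asymm {L : List ℕ} {i j : ℕ} (h : RBefore L i j) (h' : RBefore L j i) : False := by
  have := h.2.2; have := h'.2.2; omega

lemma RB.irrefl {L : List ℕ} {i : ℕ} (h : RBefore L i i) : False := by
  have := h.2.2; omega

lemma RB.total {L : List ℕ} (hnd : L.Nodup) {i j : ℕ} (hi : i ∈ L) (hj : j ∈ L)
    (hne : i ≠ j) : RBefore L i j ∨ RBefore L j i := by
  have : L.idxOf i ≠ L.idxOf j := fun h => hne ((List.idxOf_inj hi).mp h)
  rcases Nat.lt_or_ge (L.idxOf i) (L.idxOf j) with h | h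
  · exact Or.inl ⟨hi, hj, h⟩
  · exact Or.inr ⟨hj, hi, by omega⟩

lemma RB.trans {L : List ℕ} {i j k : ℕ} (h : RBefore L i j) (h' : RBefore L j k) :
    RBefore L i k := ⟨h.1, h'.2.1, h.2.2.trans h'.2.2⟩

lemma indexOf_filter_lt {L : List ℕ} (hnd : L.Nodup) (q : ℕ → Bool) :
    ∀ {i j : ℕ}, i ∈ L.filter q → j ∈ L.filter q →
      ((L.filter q).idxOf i < (L.filter q).idxOf j ↔ L.idxOf i < L.idxOf j) := by
  induction L with
  | nil => intro i j hi _; simp at hi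
  | cons x t ih =>
    intro i j hi hj
    have hndt := (List.nodup_cons.mp hnd).2
    by_cases hij : i = j
    · subst hij; omega
    by_cases hx : q x
    · have hf : (x :: t).filter q = x :: t.filter q := by simp [hx]
      by_cases hix : i = x
      · subst hix
        have hjx : j ≠ i := Ne.symm hij
        rw [hf]
        rw [List.idxOf_cons_self, List.idxOf_cons_self,
          List.idxOf_cons_ne _ hij, List.idxOf_cons_ne _ hij]
        omega
      · by_cases hjx : j = x
        · subst hjx
          rw [hf, List.idxOf_cons_self, List.idxOf_cons_self,
            List.idxOf_cons_ne _ (Ne.symm hix), List.idxOf_cons_ne _ (Ne.symm hix)]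
          omega
        · have hi' : i ∈ t.filter q := by
            rw [hf] at hi; rcases List.mem_cons.mp hi with h | h; exact absurd h hix; exact h
          have hj' : j ∈ t.filter q := by
            rw [hf] at hj; rcases List.mem_cons.mp hj with h | h; exact absurd h hjx; exact h
          rw [hf, List.idxOf_cons_ne _ (Ne.symm hix), List.idxOf_cons_ne _ (Ne.symm hjx),
            List.idxOf_cons_ne _ (Ne.symm hix), List.idxOf_cons_ne _ (Ne.symm hjx)]
          have := ih hndt hi' hj'
          omega
    · have hf : (x :: t).filter q = t.filter q := by simp [hx]
      rw [hf] at hi hj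
      have hix : i ≠ x := by
        intro h; subst h; have := (List.mem_filter.mp hi).2
        simp [hx] at this
      have hjx : j ≠ x := by
        intro h; subst h; have := (List.mem_filter.mp hj).2
        simp [hx] at this
      rw [hf, List.idxOf_cons_ne _ (Ne.symm hix), List.idxOf_cons_ne _ (Ne.symm hjx)]
      have := ih hndt hi hj
      omega

lemma RB.filter_iff {L : List ℕ} (hnd : L.Nodup) (q : ℕ → Bool) {i j : ℕ}
    (hi : i ∈ L.filter q) (hj : j ∈ L.filter q) :
    RBefore (L.filter q) i j ↔ RBefore L i j := by
  have hi' := (List.mem_filter.mp hi).1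
  have hj' := (List.mem_filter.mp hj).1
  constructor
  · rintro ⟨-, -, h⟩; exact ⟨hi', hj', (indexOf_filter_lt hnd q hi hj).mp h⟩
  · rintro ⟨-, -, h⟩; exact ⟨hi, hj, (indexOf_filter_lt hnd q hi hj).mpr h⟩

lemma RB.split {L A B : List ℕ} (hnd : L.Nodup) (hL : L = A ++ B) {x y : ℕ}
    (hx : x ∈ A) (hy : y ∈ B) : RBefore L x y := by
  subst hL
  have hxB : x ∉ B := fun h => (List.disjoint_of_nodup_append hnd) hx h
  have hyA : y ∉ A := fun h => (List.disjoint_of_nodup_append hnd) h hy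
  refine ⟨List.mem_append.mpr (Or.inl hx), List.mem_append.mpr (Or.inr hy), ?_⟩
  rw [List.idxOf_append_of_mem hx, List.idxOf_append_of_notMem hyA]
  have := List.idxOf_lt_length_iff.mpr hx
  omega

-- ===== sigma structure =====
lemma sigma_map_range (σ : List Event) : σ = (List.range σ.length).map (evAt σ) := by
  apply List.ext_getElem
  · simp
  · intro n h1 h2
    simp [evAt, List.getD_eq_getElem?_getD, List.getElem?_eq_getElem (by simpa using h2)]

def lockIdx (σ : List Event) (l : ℕ) : List ℕ :=
  (List.range σ.length).filter (fun i => onLock l (evAt σ i))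

lemma filter_onLock_eq (σ : List Event) (l : ℕ) :
    σ.filter (onLock l) = (lockIdx σ l).map (evAt σ) := by
  conv_lhs => rw [sigma_map_range σ]
  rw [List.filter_map]; rfl

lemma lockIdx_sorted (σ : List Event) (l : ℕ) :
    List.Pairwise (· < ·) (lockIdx σ l) :=
  List.pairwise_lt_range.filter _

lemma mem_lockIdx {σ : List Event} {l i : ℕ} :
    i ∈ lockIdx σ l ↔ i < σ.length ∧ onLock l (evAt σ i) = true := by
  simp [lockIdx]

lemma lockIdx_nodup (σ : List Event) (l : ℕ) : (lockIdx σ l).Nodup :=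
  (List.pairwise_lt_range.filter _).imp (fun h => Nat.ne_of_lt h)

-- ===== structure of alternating lock words =====
lemma pairs_next {l : ℕ} {w : List Event} (h : PairsLang l w) :
    ∀ k (hk : k < w.length), (w[k]).op = Op.acq l → ∀ (h1 : k+1 < w.length),
      w[k+1] = ⟨(w[k]).thread, Op.rel l⟩ := by
  induction h with
  | nil => intro k hk; simp at hk
  | pair t hrest ih =>
    intro k hk hop h1
    match k with
    | 0 => simp
    | 1 => simp at hop
    | (n+2) =>
      simp only [List.length_cons] at hk h1
      have := ih n (by omega) (by simpa using hop) (by omega)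
      simpa using this

lemma lockAlt_next {l : ℕ} {w : List Event} (h : LockAlt l w) :
    ∀ k (hk : k < w.length), (w[k]).op = Op.acq l → ∀ (h1 : k+1 < w.length),
      w[k+1] = ⟨(w[k]).thread, Op.rel l⟩ := by
  induction h with
  | nil => intro k hk; simp at hk
  | pending t =>
    intro k hk hop h1
    have : k + 1 < 1 := by simpa using h1
    omega
  | pair t hrest ih =>
    intro k hk hop h1
    match k with
    | 0 => simp
    | 1 => simp at hop
    | (n+2) =>
      simp only [List.length_cons] at hk h1
      have := ih n (by omega) (by simpa using hop) (by omega)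
      simpa using this

lemma lockIdx_strictMono {σ : List Event} {l : ℕ} {p q : ℕ}
    (hp : p < (lockIdx σ l).length) (hq : q < (lockIdx σ l).length) (h : p < q) :
    (lockIdx σ l)[p] < (lockIdx σ l)[q] :=
  (List.pairwise_iff_getElem.mp (lockIdx_sorted σ l)) p q hp hq h

lemma lockIdx_idx_lt {σ : List Event} {l : ℕ} {p q : ℕ}
    (hp : p < (lockIdx σ l).length) (hq : q < (lockIdx σ l).length)
    (h : (lockIdx σ l)[p] < (lockIdx σ l)[q]) : p < q := by
  rcases Nat.lt_trichotomy p q with h' | h' | h'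
  · exact h'
  · subst h'; omega
  · exact absurd (lockIdx_strictMono hq hp h') (by omega)

lemma isAcq_onLock {σ : List Event} {l a : ℕ} (h : isAcq σ l a) :
    onLock l (evAt σ a) = true := by
  simp [onLock, h.2]

lemma isRel_onLock {σ : List Event} {l a : ℕ} (h : isRel σ l a) :
    onLock l (evAt σ a) = true := by
  simp [onLock, h.2]

lemma matchRel_exists {σ : List Event} (hWF : LockSem σ) {l a c : ℕ} (ha : isAcq σ l a)
    (hc : c < σ.length) (hcl : onLock l (evAt σ c) = true) (hac : a < c) :
    ∃ r, MatchRel σ a r ∧ isRel σ l r ∧ r ≤ c := by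
  set L := lockIdx σ l with hL
  have haL : a ∈ L := mem_lockIdx.mpr ⟨ha.1, isAcq_onLock ha⟩
  have hcL : c ∈ L := mem_lockIdx.mpr ⟨hc, hcl⟩
  set k := L.idxOf a with hk
  have hkl : k < L.length := List.idxOf_lt_length_iff.mpr haL
  have hLk : L[k] = a := List.getElem_idxOf hkl
  have hkc : k < L.idxOf c := by
    have h1 : L.idxOf c < L.length := List.idxOf_lt_length_iff.mpr hcL
    have h2 : L[L.idxOf c] = c := List.getElem_idxOf h1
    exact lockIdx_idx_lt hkl h1 (by rw [hLk, h2]; exact hac)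
  have hk1 : k + 1 < L.length := by
    have := List.idxOf_lt_length_iff.mpr hcL; omega
  set r := L[k+1] with hr
  have har : a < r := by
    have := lockIdx_strictMono hkl hk1 (Nat.lt_succ_self k); rwa [hLk] at this
  have hrc : r ≤ c := by
    have h1 : L.idxOf c < L.length := List.idxOf_lt_length_iff.mpr hcL
    have h2 : L[L.idxOf c] = c := List.getElem_idxOf h1
    rw [hr, ← h2]
    rcases Nat.eq_or_lt_of_le hkc with h | h
    · apply le_of_eq; congr 1
    · exact le_of_lt (lockIdx_strictMono hk1 h1 h)
  obtain ⟨w, hw, hpre⟩ := hWF l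
  obtain ⟨tl, htl⟩ := hpre
  rw [filter_onLock_eq σ l, ← hL] at htl
  subst htl
  have hlen : L.length ≤ (L.map (evAt σ) ++ tl).length := by simp
  have hwk : ∀ p (hp : p < L.length),
      (L.map (evAt σ) ++ tl)[p]'(by simp; omega) = evAt σ (L[p]) := by
    intro p hp
    rw [List.getElem_append_left (by simpa using hp)]
    simp
  have hacqk : ((L.map (evAt σ) ++ tl)[k]'(by simp; omega)).op = Op.acq l := by
    rw [hwk k hkl, hLk]; exact ha.2
  have hnext := pairs_next hw k (by simp; omega) hacqk (by simp; omega)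
  rw [hwk k hkl, hwk (k+1) hk1, hLk] at hnext
  have hrlen : r < σ.length := (mem_lockIdx.mp (by rw [hr]; exact List.getElem_mem hk1)).1
  have hrel : isRel σ l r := ⟨hrlen, by rw [← hr] at hnext; rw [hnext]⟩
  have hthr : threadOf σ a = threadOf σ r := by
    rw [threadOf, threadOf, hnext]
  refine ⟨r, ⟨l, ha, hrel, har, hthr, ?_⟩, hrel, hrc⟩
  intro m hm1 hm2 hmz
  have hmL : m ∈ L := by
    rcases hmz with h | h
    · exact mem_lockIdx.mpr ⟨h.1, isAcq_onLock h⟩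
    · exact mem_lockIdx.mpr ⟨h.1, isRel_onLock h⟩
  have h1 : L.idxOf m < L.length := List.idxOf_lt_length_iff.mpr hmL
  have h2 : L[L.idxOf m] = m := List.getElem_idxOf h1
  have ha' : k < L.idxOf m := lockIdx_idx_lt hkl h1 (by rw [hLk, h2]; exact hm1)
  have hb' : L.idxOf m < k + 1 := lockIdx_idx_lt h1 hk1 (by rw [h2, ← hr]; exact hm2)
  omega

-- ===== reordering-level lemmas =====
def rhoL (σ : List Event) (ρ : List ℕ) (l : ℕ) : List ℕ :=
  ρ.filter (fun i => onLock l (evAt σ i))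

lemma lockAlt_rhoL {σ : List Event} {ρ : List ℕ} (hρ : CorrectReordering σ ρ) (l : ℕ) :
    LockAlt l ((rhoL σ ρ l).map (evAt σ)) := by
  have h := hρ.2.2.1 l
  rwa [List.filter_map, show (onLock l ∘ evAt σ) = (fun i => onLock l (evAt σ i)) from rfl] at h

lemma to_of_lt {σ : List Event} {ρ : List ℕ} (hρ : CorrectReordering σ ρ)
    {i j : ℕ} (hj : j ∈ ρ) (hij : i ≤ j) (hth : threadOf σ i = threadOf σ j) :
    TO σ i j := ⟨hij, hρ.2.1 j hj, hth⟩

/-- same-thread events of `ρ` occur in `ρ` in σ-order -/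
lemma lt_of_rbefore_thread {σ : List Event} {ρ : List ℕ} (hρ : CorrectReordering σ ρ)
    {i j : ℕ} (hi : i ∈ ρ) (hj : j ∈ ρ) (hth : threadOf σ i = threadOf σ j)
    (hb : RBefore ρ i j) : i < j := by
  have hne : i ≠ j := by rintro rfl; exact RB.irrefl hb
  rcases Nat.lt_or_ge i j with h | h
  · exact h
  · exfalso
    exact RB.asymm hb (hρ.2.2.2.2.1 j i hj hi (Ne.symm hne) ⟨by omega, hρ.2.1 i hi, hth.symm⟩)

lemma matchRel_lock {σ : List Event} {l a r : ℕ} (ha : isAcq σ l a) (hm : MatchRel σ a r) :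
    isRel σ l r ∧ a < r ∧ threadOf σ a = threadOf σ r ∧
      ∀ k, a < k → k < r → ¬ (isAcq σ l k ∨ isRel σ l k) := by
  obtain ⟨l', ha', hr', hlt, hth, hbet⟩ := hm
  have : l' = l := by
    have h1 := ha.2; have h2 := ha'.2; rw [h1] at h2; cases h2; rfl
  subst this
  exact ⟨hr', hlt, hth, hbet⟩

lemma acq_not_rel {σ : List Event} {l l' i : ℕ} (h : isAcq σ l i) (h' : isRel σ l' i) : False := by
  have h1 := h.2; have h2 := h'.2; rw [h1] at h2; exact Op.noConfusion h2

lemma match_next {σ : List Event} {ρ : List ℕ} (hρ : CorrectReordering σ ρ)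
    (hsp : SyncPreserving σ ρ) {l a1 a2 r1 : ℕ}
    (ha1 : isAcq σ l a1) (ha2 : isAcq σ l a2) (h12 : a1 < a2)
    (m1 : a1 ∈ ρ) (m2 : a2 ∈ ρ) (hm : MatchRel σ a1 r1) :
    r1 ∈ ρ ∧ RBefore ρ a1 r1 ∧ RBefore ρ r1 a2 ∧
      ∃ h : (rhoL σ ρ l).idxOf a1 + 1 < (rhoL σ ρ l).length,
        r1 = (rhoL σ ρ l)[(rhoL σ ρ l).idxOf a1 + 1] := by
  obtain ⟨hrel1, hlt1, hth1, hbet⟩ := matchRel_lock ha1 hm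
  set L := rhoL σ ρ l with hLdef
  have hndρ : ρ.Nodup := hρ.1
  have hnd : L.Nodup := hndρ.filter _
  have hb12 : RBefore ρ a1 a2 := (hsp l a1 a2 ha1 ha2 m1 m2).mpr h12
  have m1L : a1 ∈ L := List.mem_filter.mpr ⟨m1, isAcq_onLock ha1⟩
  have m2L : a2 ∈ L := List.mem_filter.mpr ⟨m2, isAcq_onLock ha2⟩
  have hb12L : RBefore L a1 a2 := (RB.filter_iff hndρ _ m1L m2L).mpr hb12
  set k := L.idxOf a1 with hkdef
  have hkl : k < L.length := List.idxOf_lt_length_iff.mpr m1L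
  have hLk : L[k] = a1 := List.getElem_idxOf hkl
  have hk2 : k < L.idxOf a2 := hb12L.2.2
  have hk1 : k + 1 < L.length := by have := List.idxOf_lt_length_iff.mpr m2L; omega
  set r := L[k+1] with hrdef
  have hrL : r ∈ L := List.getElem_mem hk1
  have hrρ : r ∈ ρ := (List.mem_filter.mp hrL).1
  have hrlen : r < σ.length := hρ.2.1 r hrρ
  have hidxr : L.idxOf r = k + 1 := List.Nodup.idxOf_getElem hnd (k+1) hk1
  have hmapk : ((L.map (evAt σ))[k]'(by simpa using hkl)) = evAt σ a1 := by
    rw [List.getElem_map, hLk]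
  have hnext := lockAlt_next (lockAlt_rhoL hρ l) k (by simpa using hkl)
      (by rw [hmapk]; exact ha1.2) (by simpa using hk1)
  rw [hmapk] at hnext
  have hevr : evAt σ r = ⟨(evAt σ a1).thread, Op.rel l⟩ := by
    have : ((L.map (evAt σ))[k+1]'(by simpa using hk1)) = evAt σ r := by
      rw [List.getElem_map]
    rw [← this, hnext]
  have hrrel : isRel σ l r := ⟨hrlen, by rw [hevr]⟩
  have hner : a1 ≠ r := by
    intro h; exact acq_not_rel ha1 (h ▸ hrrel)
  have hthar : threadOf σ a1 = threadOf σ r := by rw [threadOf, threadOf, hevr]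
  have hbar : RBefore L a1 r := ⟨m1L, hrL, by rw [hidxr, ← hkdef]; omega⟩
  have hbarρ : RBefore ρ a1 r := (RB.filter_iff hndρ _ m1L hrL).mp hbar
  have harσ : a1 < r := lt_of_rbefore_thread hρ m1 hrρ hthar hbarρ
  have hr1r : r1 ≤ r := by
    by_contra h
    exact hbet r harσ (by omega) (Or.inr hrrel)
  have hr1eq : r1 = r := by
    rcases Nat.eq_or_lt_of_le hr1r with h | h
    · exact h
    · exfalso
      have hthr1 : threadOf σ r1 = threadOf σ r := by rw [← hth1, ← hthar]
      have hTOr1 : TO σ r1 r := ⟨le_of_lt h, hrlen, hthr1⟩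
      have hr1ρ : r1 ∈ ρ := hρ.2.2.2.1 r1 r hTOr1 hrρ
      have hr1L : r1 ∈ L := List.mem_filter.mpr ⟨hr1ρ, isRel_onLock hrel1⟩
      have hb1 : RBefore ρ r1 r := hρ.2.2.2.2.1 r1 r hr1ρ hrρ (by omega) hTOr1
      have hb2 : RBefore ρ a1 r1 := hρ.2.2.2.2.1 a1 r1 m1 hr1ρ (by omega)
        ⟨le_of_lt hlt1, hρ.2.1 r1 hr1ρ, hth1⟩
      have hb1L : RBefore L r1 r := (RB.filter_iff hndρ _ hr1L hrL).mpr hb1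
      have hb2L : RBefore L a1 r1 := (RB.filter_iff hndρ _ m1L hr1L).mpr hb2
      have := hb1L.2.2; have := hb2L.2.2
      rw [hidxr] at *
      omega
  subst hr1eq
  have hba2 : RBefore ρ r a2 := by
    have hnea2 : a2 ≠ r := by
      intro h; exact acq_not_rel ha2 (h ▸ hrrel)
    have hia2 : L.idxOf a2 ≠ k + 1 := by
      intro h
      have h' : L[L.idxOf a2] = L[k+1] := by congr 1
      rw [List.getElem_idxOf (List.idxOf_lt_length_iff.mpr m2L)] at h'
      exact hnea2 (by rw [h'])
    have hbL : RBefore L r a2 := ⟨hrL, m2L, by rw [hidxr]; omega⟩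
    exact (RB.filter_iff hndρ _ hrL m2L).mp hbL
  exact ⟨hrρ, hbarρ, hba2, hk1, rfl⟩

-- ===== closure lemmas =====
lemma subset_SPClosure (σ : List Event) (S : Set ℕ) : S ⊆ SPClosure σ S := by
  intro x hx T hT; exact hT.1 hx

lemma SPClosure_min {σ : List Event} {S T : Set ℕ} (h1 : S ⊆ T) (h2 : SPClosed σ T) :
    SPClosure σ S ⊆ T := fun x hx => hx T ⟨h1, h2⟩

lemma SPClosure_closed (σ : List Event) (S : Set ℕ) : SPClosed σ (SPClosure σ S) := by
  refine ⟨⟨?_, ?_⟩, ?_⟩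
  · intro i j hTO hj T hT; exact hT.2.1.1 i j hTO (hj T hT)
  · intro i j hlw hj T hT; exact hT.2.1.2 i j hlw (hj T hT)
  · intro l a1 a2 r1 h1 h2 h3 ha1 ha2 hm T hT
    exact hT.2.2 l a1 a2 r1 h1 h2 h3 (ha1 T hT) (ha2 T hT) hm

lemma lastWrite_mem_ρ {σ : List Event} {ρ : List ℕ} (hρ : CorrectReordering σ ρ)
    {i j : ℕ} (hlw : LastWrite σ i j) (hj : j ∈ ρ) : RBefore ρ i j := by
  obtain ⟨x, hw, hr, hij, hbet⟩ := hlw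
  obtain ⟨x', _, _, hb, _⟩ := (hρ.2.2.2.2.2 j x hr hj i).mpr ⟨x, hw, hr, hij, hbet⟩
  exact hb

lemma mem_ρ_SPClosed {σ : List Event} {ρ : List ℕ} (hWF : LockSem σ)
    (hρ : CorrectReordering σ ρ) (hsp : SyncPreserving σ ρ) :
    SPClosed σ {i | i ∈ ρ} := by
  refine ⟨⟨?_, ?_⟩, ?_⟩
  · intro i j hTO hj; exact hρ.2.2.2.1 i j hTO hj
  · intro i j hlw hj; exact (lastWrite_mem_ρ hρ hlw hj).1
  · intro l a1 a2 r1 h1 h2 h3 ha1 ha2 hm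
    exact (match_next hρ hsp h1 h2 h3 ha1 ha2 hm).1

-- max-element picking
lemma exists_rb_max {σ : List Event} {ρ : List ℕ} {x j : ℕ}
    (h : ∃ k, isWrite σ x k ∧ RBefore ρ k j) :
    ∃ k0, isWrite σ x k0 ∧ RBefore ρ k0 j ∧
      ∀ k, isWrite σ x k → RBefore ρ k j → ρ.idxOf k ≤ ρ.idxOf k0 := by
  classical
  obtain ⟨k, hk1, hk2⟩ := h
  set s : Finset ℕ := ρ.toFinset.filter (fun m => isWrite σ x m ∧ RBefore ρ m j) with hs
  have hks : k ∈ s := by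
    rw [hs]; simp only [Finset.mem_filter, List.mem_toFinset]; exact ⟨hk2.1, hk1, hk2⟩
  obtain ⟨k0, hk0s, hk0max⟩ := s.exists_max_image (fun m => ρ.idxOf m) ⟨k, hks⟩
  rw [hs] at hk0s; simp only [Finset.mem_filter, List.mem_toFinset] at hk0s
  refine ⟨k0, hk0s.2.1, hk0s.2.2, ?_⟩
  intro m hm1 hm2
  refine hk0max m ?_
  rw [hs]; simp only [Finset.mem_filter, List.mem_toFinset]
  exact ⟨hm2.1, hm1, hm2⟩

lemma exists_lastWrite {σ : List Event} {x j : ℕ} (hr : isRead σ x j)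
    (h : ∃ k, isWrite σ x k ∧ k < j) : ∃ k0, isWrite σ x k0 ∧ LastWrite σ k0 j := by
  classical
  obtain ⟨k, hk1, hk2⟩ := h
  set s : Finset ℕ := (Finset.range j).filter (fun m => isWrite σ x m) with hs
  have hks : k ∈ s := by
    rw [hs]; simp only [Finset.mem_filter, Finset.mem_range]; exact ⟨hk2, hk1⟩
  obtain ⟨k0, hk0s, hk0max⟩ := s.exists_max_image (fun m => m) ⟨k, hks⟩
  rw [hs] at hk0s; simp only [Finset.mem_filter, Finset.mem_range] at hk0s
  refine ⟨k0, hk0s.2, ?_⟩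
  refine ⟨x, hk0s.2, hr, hk0s.1, ?_⟩
  intro m hm1 hm2 hm3
  have : m ∈ s := by rw [hs]; simp only [Finset.mem_filter, Finset.mem_range]; exact ⟨hm2, hm3⟩
  have := hk0max m this
  omega

-- ===== facts about an adjacent acq/rel pair in the lock projection of ρ =====
lemma pair_split {σ : List Event} {ρ : List ℕ} (hρ : CorrectReordering σ ρ)
    {l t : ℕ} {tl0 rest : List ℕ} {a r : ℕ}
    (hsplit : rhoL σ ρ l = tl0 ++ a :: r :: rest)
    (hEa : evAt σ a = ⟨t, Op.acq l⟩) (hEr : evAt σ r = ⟨t, Op.rel l⟩) :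
    a ∈ ρ ∧ r ∈ ρ ∧ isAcq σ l a ∧ isRel σ l r ∧ a < r ∧ TO σ a r ∧
      (∀ c ∈ rest, RBefore ρ a c) ∧
      (rhoL σ ρ l).idxOf a = tl0.length ∧
      ∃ h : tl0.length + 1 < (rhoL σ ρ l).length, (rhoL σ ρ l)[tl0.length + 1] = r := by
  have hndρ : ρ.Nodup := hρ.1
  have hnd : (rhoL σ ρ l).Nodup := hndρ.filter _
  have haL : a ∈ rhoL σ ρ l := by rw [hsplit]; simp
  have hrL : r ∈ rhoL σ ρ l := by rw [hsplit]; simp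
  have haρ : a ∈ ρ := (List.mem_filter.mp haL).1
  have hrρ : r ∈ ρ := (List.mem_filter.mp hrL).1
  have halen : a < σ.length := hρ.2.1 a haρ
  have hrlen : r < σ.length := hρ.2.1 r hrρ
  have hacq : isAcq σ l a := ⟨halen, by rw [hEa]⟩
  have hrel : isRel σ l r := ⟨hrlen, by rw [hEr]⟩
  have hsplit' : rhoL σ ρ l = (tl0 ++ [a]) ++ (r :: rest) := by
    rw [hsplit]; simp
  have hth : threadOf σ a = threadOf σ r := by
    rw [threadOf, threadOf, hEa, hEr]
  have hbar : RBefore ρ a r := by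
    have h := RB.split hnd hsplit' (x := a) (y := r) (by simp) (by simp)
    exact (RB.filter_iff hndρ _ haL hrL).mp h
  have har : a < r := lt_of_rbefore_thread hρ haρ hrρ hth hbar
  have hTOar : TO σ a r := ⟨le_of_lt har, hrlen, hth⟩
  have hrbc : ∀ c ∈ rest, RBefore ρ a c := by
    intro c hc
    have hcL : c ∈ rhoL σ ρ l := by rw [hsplit]; simp [hc]
    have h := RB.split hnd hsplit' (x := a) (y := c) (by simp) (by simp [hc])
    exact (RB.filter_iff hndρ _ haL hcL).mp h
  have hanotl : a ∉ tl0 := by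
    intro h
    have h2 := hsplit ▸ hnd
    rw [List.nodup_append] at h2
    exact h2.2.2 a h a (by simp) rfl
  have hidx : (rhoL σ ρ l).idxOf a = tl0.length := by
    rw [hsplit, List.idxOf_append_of_notMem hanotl, List.idxOf_cons_self]
    omega
  have hlen1 : tl0.length + 1 < (rhoL σ ρ l).length := by
    rw [hsplit]; simp
  have helem : (rhoL σ ρ l)[tl0.length + 1]'hlen1 = r := by
    have h2 : (rhoL σ ρ l)[tl0.length + 1]'hlen1 =
        (tl0 ++ a :: r :: rest)[tl0.length + 1]'(by rw [← hsplit]; exact hlen1) := by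
      congr 1
    rw [h2, List.getElem_append_right (by omega)]
    simp
  exact ⟨haρ, hrρ, hacq, hrel, har, hTOar, hrbc, hidx, hlen1, helem⟩

lemma lockAlt_single {l : ℕ} {e : Event} (h : LockAlt l [e]) : ∃ t, e = ⟨t, Op.acq l⟩ := by
  cases h with | pending t => exact ⟨t, rfl⟩

lemma lockAlt_cons2 {l : ℕ} {e1 e2 : Event} {es : List Event} (h : LockAlt l (e1 :: e2 :: es)) :
    ∃ t, e1 = ⟨t, Op.acq l⟩ ∧ e2 = ⟨t, Op.rel l⟩ ∧ LockAlt l es := by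
  cases h with | pair t h => exact ⟨t, rfl, rfl, h⟩

-- ===== every kept lock event yields a kept acquire =====
lemma kept_acq {σ : List Event} {ρ : List ℕ} (hρ : CorrectReordering σ ρ)
    {S : Set ℕ} (hTOd : ∀ i j, TO σ i j → j ∈ S → i ∈ S) (l : ℕ) :
    ∀ n (w : List ℕ), w.length ≤ n → w <:+ rhoL σ ρ l →
      LockAlt l (w.map (evAt σ)) → ∀ b ∈ w, b ∈ S →
      ∃ c ∈ w, c ∈ S ∧ isAcq σ l c := by
  intro n
  induction n with
  | zero =>
    intro w hlen _ _ b hb _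
    have : w = [] := List.length_eq_zero_iff.mp (by omega)
    subst this; simp at hb
  | succ n ih =>
    intro w hlen hsuf halt b hb hbS
    match w with
    | [] => simp at hb
    | [a] =>
      have hmem : a ∈ rhoL σ ρ l := hsuf.sublist.subset (by simp)
      have haρ : a ∈ ρ := (List.mem_filter.mp hmem).1
      rw [List.mem_singleton] at hb; subst hb
      obtain ⟨t, hE⟩ := lockAlt_single (by simpa using halt)
      exact ⟨b, by simp, hbS, hρ.2.1 b haρ, by rw [hE]⟩
    | a :: r :: rest =>
      obtain ⟨t, hEa, hEr, hrest⟩ := lockAlt_cons2 (by simpa using halt)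
      obtain ⟨tl0, hsplit⟩ := hsuf
      obtain ⟨haρ, hrρ, hacq, hrel, har, hTOar, hrbc, -, -⟩ :=
        pair_split hρ hsplit.symm hEa hEr
      rcases List.mem_cons.mp hb with hba | hb'
      · subst hba; exact ⟨b, by simp, hbS, hacq⟩
      rcases List.mem_cons.mp hb' with hbr | hbrest
      · subst hbr
        exact ⟨a, by simp, hTOd a b hTOar hbS, hacq⟩
      · have hsuf' : rest <:+ rhoL σ ρ l := ⟨tl0 ++ [a, r], by rw [← hsplit]; simp⟩
        have hlen' : rest.length ≤ n := by simp at hlen; omega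
        obtain ⟨c, hc1, hc2, hc3⟩ := ih rest hlen' hsuf' hrest b hbrest hbS
        exact ⟨c, by simp [hc1], hc2, hc3⟩

-- ===== lock well-formedness of the S-filtered reordering =====
lemma filter_lockAlt {σ : List Event} {ρ : List ℕ} (hWF : LockSem σ)
    (hρ : CorrectReordering σ ρ) (hsp : SyncPreserving σ ρ)
    {S : Set ℕ} (hTOd : ∀ i j, TO σ i j → j ∈ S → i ∈ S)
    (hLk : ∀ l a1 a2 r1, isAcq σ l a1 → isAcq σ l a2 → a1 < a2 →
      a1 ∈ S → a2 ∈ S → MatchRel σ a1 r1 → r1 ∈ S)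
    {p : ℕ → Bool} (hp : ∀ i, p i = true ↔ i ∈ S) (l : ℕ) :
    ∀ n (w : List ℕ), w.length ≤ n → w <:+ rhoL σ ρ l →
      LockAlt l (w.map (evAt σ)) → LockAlt l ((w.filter p).map (evAt σ)) := by
  intro n
  induction n with
  | zero =>
    intro w hlen _ _
    have : w = [] := List.length_eq_zero_iff.mp (by omega)
    subst this; simpa using LockAlt.nil
  | succ n ih =>
    intro w hlen hsuf halt
    match w with
    | [] => simpa using LockAlt.nil
    | [a] =>
      obtain ⟨t, hE⟩ := lockAlt_single (by simpa using halt)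
      by_cases hpa : p a = true
      · simp only [List.filter, hpa, List.map]
        rw [hE]
        exact LockAlt.pending t
      · simp only [List.filter, Bool.not_eq_true] at *
        simp [hpa]
        exact LockAlt.nil
    | a :: r :: rest =>
      obtain ⟨t, hEa, hEr, hrest⟩ := lockAlt_cons2 (by simpa using halt)
      obtain ⟨tl0, hsplit⟩ := hsuf
      obtain ⟨haρ, hrρ, hacq, hrel, har, hTOar, hrbc, hidx, hlen1, helem⟩ :=
        pair_split hρ hsplit.symm hEa hEr
      have hsuf' : rest <:+ rhoL σ ρ l := ⟨tl0 ++ [a, r], by rw [← hsplit]; simp⟩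
      have hlen' : rest.length ≤ n := by simp at hlen; omega
      have ihrest := ih rest hlen' hsuf' hrest
      by_cases hpa : p a = true
      · by_cases hpr : p r = true
        · have : (a :: r :: rest).filter p = a :: r :: rest.filter p := by
            simp [List.filter, hpa, hpr]
          rw [this]
          simp only [List.map]
          rw [hEa, hEr]
          exact LockAlt.pair t ihrest
        · -- a kept, r dropped: no kept event may remain in rest
          have hrestnil : rest.filter p = [] := by
            rw [List.filter_eq_nil_iff]
            intro b hb hpb
            apply hpr
            -- find a kept acquire c in rest
            obtain ⟨c, hcrest, hcS, hcacq⟩ := kept_acq hρ hTOd l rest.length rest le_rfl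
              hsuf' hrest b hb ((hp b).mp hpb)
            have hcρ : c ∈ ρ := by
              have : c ∈ rhoL σ ρ l := hsuf'.sublist.subset hcrest
              exact (List.mem_filter.mp this).1
            have hrbac : RBefore ρ a c := hrbc c hcrest
            have hac : a < c := (hsp l a c hacq hcacq haρ hcρ).mp hrbac
            obtain ⟨r1, hm, hr1rel, hr1c⟩ :=
              matchRel_exists hWF hacq (hρ.2.1 c hcρ) (isAcq_onLock hcacq) hac
            have hr1S : r1 ∈ S := hLk l a c r1 hacq hcacq hac ((hp a).mp hpa) hcS hm
            obtain ⟨-, -, -, hex⟩ := match_next hρ hsp hacq hcacq hac haρ hcρ hm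
            obtain ⟨hh, heq⟩ := hex
            have hir : (rhoL σ ρ l)[(rhoL σ ρ l).idxOf a + 1]'hh =
                (rhoL σ ρ l)[tl0.length + 1]'hlen1 := by
              congr 1
              rw [hidx]
            have hr1r : r1 = r := heq.trans (hir.trans helem)
            exact (hp r).mpr (hr1r ▸ hr1S)
          rw [show (a :: r :: rest).filter p = a :: rest.filter p by
            simp [List.filter, hpa, hpr], hrestnil]
          simp only [List.map]
          rw [hEa]
          exact LockAlt.pending t
      · -- a dropped ⇒ r dropped too
        have hpr : ¬ p r = true := by
          intro hpr
          exact hpa ((hp a).mpr (hTOd a r hTOar ((hp r).mp hpr)))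
        rw [show (a :: r :: rest).filter p = rest.filter p by
          simp [List.filter, hpa, hpr]]
        exact ihrest

-- ===== the S-filtered reordering is a sync-preserving correct reordering =====
lemma sub_reordering {σ : List Event} {ρ : List ℕ} (hWF : LockSem σ)
    (hρ : CorrectReordering σ ρ) (hsp : SyncPreserving σ ρ)
    {S : Set ℕ} (hcl : SPClosed σ S)
    {p : ℕ → Bool} (hp : ∀ i, p i = true ↔ i ∈ S) :
    CorrectReordering σ (ρ.filter p) ∧ SyncPreserving σ (ρ.filter p) := by
  obtain ⟨⟨hTOd, hLW⟩, hLk⟩ := hcl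
  have hnd := hρ.1
  have hbnd := hρ.2.1
  have hclo := hρ.2.2.2.1
  have hresp := hρ.2.2.2.2.1
  have hreads := hρ.2.2.2.2.2
  set ρ' := ρ.filter p with hρ'
  have hnd' : ρ'.Nodup := hnd.filter p
  have hmem' : ∀ {i}, i ∈ ρ' ↔ i ∈ ρ ∧ i ∈ S := by
    intro i; rw [hρ', List.mem_filter, hp]
  have hrbiff : ∀ {i j}, i ∈ ρ' → j ∈ ρ' → (RBefore ρ' i j ↔ RBefore ρ i j) :=
    fun hi hj => RB.filter_iff hnd p hi hj
  have hback : ∀ j x, isRead σ x j → j ∈ ρ' → ∀ i, LastWrite σ i j → LastWriteIn σ ρ' i j := by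
    intro j x hr hj i hlw
    have hjρ : j ∈ ρ := (hmem'.mp hj).1
    obtain ⟨x', hw', hr', hbρ, hmaxρ⟩ := (hreads j x hr hjρ i).mpr hlw
    have hiS : i ∈ S := hLW i j hlw (hmem'.mp hj).2
    have hi' : i ∈ ρ' := hmem'.mpr ⟨hbρ.1, hiS⟩
    refine ⟨x', hw', hr', (hrbiff hi' hj).mpr hbρ, ?_⟩
    intro k hk ⟨hb1, hb2⟩
    have hkρ' : k ∈ ρ' := hb1.2.1
    exact hmaxρ k hk ⟨(hrbiff hi' hkρ').mp hb1, (hrbiff hkρ' hj).mp hb2⟩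
  constructor
  · refine ⟨hnd', ?_, ?_, ?_, ?_, ?_⟩
    · intro i hi; exact hbnd i (hmem'.mp hi).1
    · -- well-formedness
      intro l
      rw [List.filter_map]
      have hcomm : ρ'.filter (fun i => onLock l (evAt σ i)) = (rhoL σ ρ l).filter p := by
        rw [hρ', rhoL, List.filter_filter, List.filter_filter]
        congr 1
        funext i
        exact Bool.and_comm _ _
      rw [show (ρ'.filter ((onLock l) ∘ (evAt σ))) = ρ'.filter (fun i => onLock l (evAt σ i)) from rfl, hcomm]
      exact filter_lockAlt hWF hρ hsp hTOd hLk hp l (rhoL σ ρ l).length (rhoL σ ρ l)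
        le_rfl (List.suffix_refl _) (lockAlt_rhoL hρ l)
    · intro i j hTO hj
      exact hmem'.mpr ⟨hclo i j hTO (hmem'.mp hj).1, hTOd i j hTO (hmem'.mp hj).2⟩
    · intro i j hi hj hne hTO
      exact (hrbiff hi hj).mpr (hresp i j (hmem'.mp hi).1 (hmem'.mp hj).1 hne hTO)
    · intro j x hr hj i
      constructor
      · -- LastWriteIn ρ' → LastWrite
        rintro ⟨x', hw', hr', hb, hmax⟩
        have hjρ : j ∈ ρ := (hmem'.mp hj).1
        by_cases hex : ∃ k, isWrite σ x' k ∧ k < j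
        · obtain ⟨k0, hk0w, hk0lw⟩ := exists_lastWrite hr' hex
          have hk0in := hback j x' hr' hj k0 hk0lw
          obtain ⟨x'', hw'', -, hb0, hmax0⟩ := hk0in
          by_cases hik : i = k0
          · rwa [hik]
          · exfalso
            have hi' : i ∈ ρ' := hb.1
            have hk0' : k0 ∈ ρ' := hb0.1
            rcases RB.total hnd' hi' hk0' hik with h | h
            · exact hmax k0 hk0w ⟨h, hb0⟩
            · -- k0 before i : contradicts maximality of k0
              have hwx'' : isWrite σ x'' i := by
                have h1 := hw'.2
                have h2 := hw''.2
                -- x'' = x' since both are write ops of k0... k0 writes x' and x''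
                have h3 := hk0w.2
                rw [h3] at h2
                cases h2
                exact hw'
              exact hmax0 i hwx'' ⟨h, hb⟩
        · exfalso
          have hbρ : RBefore ρ i j := (hrbiff hb.1 hj).mp hb
          obtain ⟨k0, hk0w, hk0b, hk0max⟩ := exists_rb_max ⟨i, hw', hbρ⟩
          have : LastWriteIn σ ρ k0 j := by
            refine ⟨x', hk0w, hr', hk0b, ?_⟩
            rintro k hk ⟨hb1, hb2⟩
            have h1 := hk0max k hk hb2
            have h2 := hb1.2.2
            omega
          have hlw0 := (hreads j x' hr' hjρ k0).mp this
          obtain ⟨y, hy1, -, hlt, -⟩ := hlw0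
          have : y = x' := by
            have h1 := hy1.2; have h2 := hk0w.2; rw [h1] at h2; cases h2; rfl
          exact hex ⟨k0, hk0w, hlt⟩
      · intro hlw
        have : isRead σ x j := hr
        exact hback j x hr hj i hlw
  · intro l a1 a2 ha1 ha2 m1 m2
    rw [hrbiff m1 m2]
    exact hsp l a1 a2 ha1 ha2 (hmem'.mp m1).1 (hmem'.mp m2).1


/-- if `e1 <_σ e2`, `e2 ≤_TO e2'`, `e1` conflicts with both `e2` and
`e2'`, and `(e1, e2)` is not a sync-preserving race of `σ`, then `(e1, e2')` is also
not a sync-preserving race of `σ`. -/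
theorem stmt6 (σ : List Event) (hWF : LockSem σ) (e1 e2 e2' : ℕ)
    (h12 : e1 < e2) (hTO : TO σ e2 e2')
    (hc : Conflict σ e1 e2) (hc' : Conflict σ e1 e2')
    (hnr : ¬ SPRace σ e1 e2) :
    ¬ SPRace σ e1 e2' := by
  rintro ⟨hconf', ρ, hρ, hsp, hen1, hen2'⟩
  rcases eq_or_ne e2 e2' with rfl | hne
  · exact hnr ⟨hc, ρ, hρ, hsp, hen1, hen2'⟩
  classical
  have he1len : e1 < σ.length := hc.1
  have he2len : e2 < σ.length := hc.2.1
  have he2ρ : e2 ∈ ρ := hen2'.2.2 e2 hne hTO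
  set Base : Set ℕ := {i | RBefore ρ i e2 ∨ (TO σ i e1 ∧ i ≠ e1)} with hBase
  set S : Set ℕ := SPClosure σ Base with hS
  have hScl : SPClosed σ S := SPClosure_closed σ Base
  set p : ℕ → Bool := fun i => decide (i ∈ S) with hpdef
  have hp : ∀ i, p i = true ↔ i ∈ S := by intro i; simp [hpdef]
  obtain ⟨hρ', hsp'⟩ := sub_reordering hWF hρ hsp hScl hp
  have hBaseρ : Base ⊆ {i | i ∈ ρ} := by
    rintro i (h | h)
    · exact h.1
    · exact hen1.2.2 i h.2 h.1
  have hSρ : S ⊆ {i | i ∈ ρ} := SPClosure_min hBaseρ (mem_ρ_SPClosed hWF hρ hsp)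
  set U : Set ℕ := {i | i ∈ ρ ∧ (RBefore ρ i e2 ∨ i < e1)} with hU
  have hBaseU : Base ⊆ U := by
    rintro i (h | h)
    · exact ⟨h.1, Or.inl h⟩
    · refine ⟨hen1.2.2 i h.2 h.1, Or.inr ?_⟩
      have h1 := h.1.1
      have h2 := h.2
      omega
  have hUcl : SPClosed σ U := by
    refine ⟨⟨?_, ?_⟩, ?_⟩
    · rintro i j hTOij ⟨hjρ, hj⟩
      have hiρ : i ∈ ρ := hρ.2.2.2.1 i j hTOij hjρ
      refine ⟨hiρ, ?_⟩
      rcases hj with hj | hj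
      · rcases eq_or_ne i j with rfl | hnij
        · exact Or.inl hj
        · exact Or.inl (RB.trans (hρ.2.2.2.2.1 i j hiρ hjρ hnij hTOij) hj)
      · exact Or.inr (by have := hTOij.1; omega)
    · rintro i j hlw ⟨hjρ, hj⟩
      have hb : RBefore ρ i j := lastWrite_mem_ρ hρ hlw hjρ
      refine ⟨hb.1, ?_⟩
      rcases hj with hj | hj
      · exact Or.inl (RB.trans hb hj)
      · obtain ⟨x, -, -, hij, -⟩ := hlw
        exact Or.inr (by omega)
    · rintro l a1 a2 r1 ha1 ha2 h12' ⟨ha1ρ, hu1⟩ ⟨ha2ρ, hu2⟩ hm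
      obtain ⟨hr1ρ, hb1, hb2, -⟩ := match_next hρ hsp ha1 ha2 h12' ha1ρ ha2ρ hm
      refine ⟨hr1ρ, ?_⟩
      rcases hu2 with hu2 | hu2
      · exact Or.inl (RB.trans hb2 hu2)
      · obtain ⟨hrel1, hlt1, -, hbet⟩ := matchRel_lock ha1 hm
        have hr1a2 : r1 < a2 := by
          rcases Nat.lt_trichotomy r1 a2 with h | h | h
          · exact h
          · exact absurd (h ▸ hrel1) (fun hh => acq_not_rel ha2 hh)
          · exact absurd (Or.inl ha2) (hbet a2 h12' h)
        exact Or.inr (by omega)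
  have hSU : S ⊆ U := SPClosure_min hBaseU hUcl
  have he1S : e1 ∉ S := fun h => hen1.2.1 (hSρ h)
  have he2S : e2 ∉ S := by
    intro h
    rcases (hSU h).2 with h' | h'
    · exact RB.irrefl h'
    · omega
  refine hnr ⟨hc, ρ.filter p, hρ', hsp', ⟨he1len, ?_, ?_⟩, ⟨he2len, ?_, ?_⟩⟩
  · intro h
    exact hen1.2.1 (List.mem_filter.mp h).1
  · intro i hine hiTO
    have hiρ : i ∈ ρ := hen1.2.2 i hine hiTO
    have hiS : i ∈ S := subset_SPClosure σ Base (Or.inr ⟨hiTO, hine⟩)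
    exact List.mem_filter.mpr ⟨hiρ, (hp i).mpr hiS⟩
  · intro h
    exact he2S ((hp e2).mp (List.mem_filter.mp h).2)
  · intro i hine hiTO
    have hiTO' : TO σ i e2' := ⟨hiTO.1.trans hTO.1, hTO.2.1, hiTO.2.2.trans hTO.2.2⟩
    have hine' : i ≠ e2' := by
      intro h
      have h1 := hiTO.1
      have h2 := hTO.1
      have : e2 = e2' := by omega
      exact hne this
    have hiρ : i ∈ ρ := hen2'.2.2 i hine' hiTO'
    have hib : RBefore ρ i e2 := hρ.2.2.2.2.1 i e2 hiρ he2ρ hine hiTO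
    have hiS : i ∈ S := subset_SPClosure σ Base (Or.inl hib)
    exact List.mem_filter.mpr ⟨hiρ, (hp i).mpr hiS⟩
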